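/- Let A be a total order (axis) on a finite candidate set C and let V be a strict partial order on C. If V contains a u-valley with respect to A (i.e., there exist distinct a,b,c,d ∈ C with a ⊳ b ⊳ d and a ⊳ c ⊳ d on A, a ≻ b and d ≻ c in V), then every linear extension of V to a total order on C contains a v-valley with respect to A (i.e., three candidates x ⊳ y ⊳ z on A with x ≻ y and z ≻ y). -/

import Mathlib

def VValley {C : Type*} (A V : C → C → Prop) : Prop :=
  ∃ c1 c2 c3 : C, A c1 c2 ∧ A c2 c3 ∧ V c1 c2 ∧ V c3 c2

def UValley {C : Type*} (A V : C → C → Prop) : Prop :=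
  ∃ a b c d : C, a ≠ b ∧ a ≠ c ∧ a ≠ d ∧ b ≠ c ∧ b ≠ d ∧ c ≠ d ∧
    A a b ∧ A b d ∧ A a c ∧ A c d ∧ V a b ∧ V d c

def Extends {C : Type*} (V T : C → C → Prop) : Prop :=
  ∀ x y, V x y → T x y

/-- `V` is a strict partial order: asymmetric and transitive. -/
def IsSPO {C : Type*} (V : C → C → Prop) : Prop :=
  (∀ x y, V x y → ¬ V y x) ∧ (∀ x y z, V x y → V y z → V x z)

/-- `V` is a strict weak order: a strict partial order with transitive incomparability. -/
def IsSWO {C : Type*} (V : C → C → Prop) : Prop :=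
  IsSPO V ∧ ∀ x y z, (¬ V x y ∧ ¬ V y x) → (¬ V y z ∧ ¬ V z y) → (¬ V x z ∧ ¬ V z x)

/-- `V` possibly single-peaked w.r.t. axis `A`: it extends to a total order with no v-valley. -/
def PossSP {C : Type*} (A V : C → C → Prop) : Prop :=
  ∃ T : C → C → Prop, IsStrictTotalOrder C T ∧ Extends V T ∧ ¬ VValley A T

theorem stmt0 {C : Type*} [Fintype C] (A V : C → C → Prop)
    (hA : IsStrictTotalOrder C A) (hV : IsSPO V)
    (hu : UValley A V) :
    ∀ T : C → C → Prop, IsStrictTotalOrder C T → Extends V T → VValley A T := by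
  obtain ⟨a, b, c, d, hab, hac, had, hbc, hbd, hcd, Aab, Abd, Aac, Acd, Vab, Vdc⟩ := hu
  intro T hT hext
  have Tab : T a b := hext _ _ Vab
  have Tdc : T d c := hext _ _ Vdc
  have Ttr : ∀ x y z, T x y → T y z → T x z := fun x y z => hT.trans x y z
  have Ttri := (haveI := hT; trichotomous_of T)
  rcases (haveI := hA; trichotomous_of A b c) with Abc | heq | Acb
  case inr.inl => exact absurd heq hbc
  · -- a ⊳ b ⊳ c ⊳ d
    rcases Ttri d b with Tdb | heq | Tbd
    · exact ⟨a, b, d, Aab, Abd, Tab, Tdb⟩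
    · exact absurd heq (Ne.symm hbd)
    · rcases Ttri a c with Tac | heq | Tca
      · exact ⟨a, c, d, Aac, Acd, Tac, Tdc⟩
      · exact absurd heq hac
      · exact ⟨a, b, c, Aab, Abc, Tab, Ttr _ _ _ Tca Tab⟩
  · -- a ⊳ c ⊳ b ⊳ d
    rcases Ttri a c with Tac | heq | Tca
    · exact ⟨a, c, d, Aac, Acd, Tac, Tdc⟩
    · exact absurd heq hac
    · rcases Ttri d b with Tdb | heq | Tbd
      · exact ⟨a, b, d, Aab, Abd, Tab, Tdb⟩
      · exact absurd heq (Ne.symm hbd)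
      · exact absurd (Ttr _ _ _ (Ttr _ _ _ (Ttr _ _ _ Tca Tab) Tbd) Tdc)
          (hT.irrefl c)
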